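/- Fix a, b, c, τ > 0. Define P4(λ) = λ^4 - (c^2 + (a+b)/τ)λ^2 + a c^2/τ and P3(λ) = τ^{-1}·λ·(λ^2 - c^2). Then the roots of P3 are -c, 0, c; the roots of P4 are ±√((A ± √(A^2 - 4ac^2/τ))/2) where A = c^2 + (a+b)/τ; and P3 and P4 strictly interlace if and only if b > 0. -/
import Mathlib

set_option maxHeartbeats 1000000


/-- Symbol of the hyperbolic Blackstock–Crighton-type equation at unit frequency:
roots of `P3(λ) = τ⁻¹λ(λ² - c²)` are `-c, 0, c`; roots of
`P4(λ) = λ⁴ - Aλ² + ac²/τ`, `A = c² + (a+b)/τ`, are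
`±√((A ± √(A² - 4ac²/τ))/2)`; and `P3, P4` strictly interlace iff `b > 0`. -/
theorem stmt6 (a c τ b : ℝ) (ha : 0 < a) (hc : 0 < c) (hτ : 0 < τ) (hb : 0 ≤ b) :
    let A := c ^ 2 + (a + b) / τ
    let rp := Real.sqrt ((A + Real.sqrt (A ^ 2 - 4 * a * c ^ 2 / τ)) / 2)
    let rm := Real.sqrt ((A - Real.sqrt (A ^ 2 - 4 * a * c ^ 2 / τ)) / 2)
    (∀ l : ℝ, τ⁻¹ * l * (l ^ 2 - c ^ 2) = 0 ↔ l = -c ∨ l = 0 ∨ l = c) ∧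
    (∀ l : ℝ, l ^ 4 - A * l ^ 2 + a * c ^ 2 / τ = 0 ↔
      l = -rp ∨ l = -rm ∨ l = rm ∨ l = rp) ∧
    ((-rp < -c ∧ -c < -rm ∧ -rm < 0 ∧ 0 < rm ∧ rm < c ∧ c < rp) ↔ 0 < b) := by
  intro A rp rm
  have hτ' : τ ≠ 0 := hτ.ne'
  have hA : A = c ^ 2 + (a + b) / τ := rfl
  have hApos : 0 < A := by rw [hA]; positivity
  have hDdecomp : A ^ 2 - 4 * a * c ^ 2 / τ
      = (c ^ 2 - (a + b) / τ) ^ 2 + 4 * b * c ^ 2 / τ := by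
    rw [hA]; field_simp; ring
  have hD0 : 0 ≤ A ^ 2 - 4 * a * c ^ 2 / τ := by
    rw [hDdecomp]; positivity
  set s := Real.sqrt (A ^ 2 - 4 * a * c ^ 2 / τ) with hs_def
  have hs0 : 0 ≤ s := Real.sqrt_nonneg _
  have hs : s ^ 2 = A ^ 2 - 4 * a * c ^ 2 / τ := Real.sq_sqrt hD0
  have hrp : rp = Real.sqrt ((A + s) / 2) := rfl
  have hrm : rm = Real.sqrt ((A - s) / 2) := rfl
  clear_value rm rp s A
  have hsltA : s < A := by
    have h4 : 0 < 4 * a * c ^ 2 / τ := by positivity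
    nlinarith
  have hp2 : rp ^ 2 = (A + s) / 2 := by
    rw [hrp]; exact Real.sq_sqrt (by linarith)
  have hm2 : rm ^ 2 = (A - s) / 2 := by
    rw [hrm]; exact Real.sq_sqrt (by linarith)
  have hrp0 : 0 ≤ rp := by rw [hrp]; exact Real.sqrt_nonneg _
  have hrmpos : 0 < rm := by
    rw [hrm]; exact Real.sqrt_pos.mpr (by linarith)
  have hsum : rp ^ 2 + rm ^ 2 = A := by rw [hp2, hm2]; ring
  have hprod : rp ^ 2 * rm ^ 2 = a * c ^ 2 / τ := by
    rw [hp2, hm2]; linear_combination (-1/4 : ℝ) * hs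
  have key : ∀ l : ℝ, l ^ 4 - A * l ^ 2 + a * c ^ 2 / τ
      = (l - rp) * (l + rp) * ((l - rm) * (l + rm)) := by
    intro l
    linear_combination l ^ 2 * hsum - hprod
  refine ⟨?_, ?_, ?_⟩
  · intro l
    have hfac : τ⁻¹ * l * (l ^ 2 - c ^ 2) = τ⁻¹ * (l * ((l - c) * (l + c))) := by ring
    rw [hfac, mul_eq_zero, mul_eq_zero, mul_eq_zero]
    simp only [inv_eq_zero, hτ', false_or, sub_eq_zero, add_eq_zero_iff_eq_neg]
    tauto
  · intro l
    have hz : l ^ 4 - A * l ^ 2 + a * c ^ 2 / τ = 0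
        ↔ (l - rp) * (l + rp) * ((l - rm) * (l + rm)) = 0 := by rw [key l]
    rw [hz, mul_eq_zero, mul_eq_zero, mul_eq_zero, sub_eq_zero, sub_eq_zero,
      add_eq_zero_iff_eq_neg, add_eq_zero_iff_eq_neg]
    tauto
  · have hP4c : c ^ 4 - A * c ^ 2 + a * c ^ 2 / τ = -(b * c ^ 2 / τ) := by
      rw [hA]; field_simp; ring
    have keyc : (c - rp) * (c + rp) * ((c - rm) * (c + rm)) = -(b * c ^ 2 / τ) :=
      (key c).symm.trans hP4c
    constructor
    · rintro ⟨h1, h2, h3, h4, h5, h6⟩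
      have e1 : 0 < rp - c := by linarith
      have e2 : 0 < c + rp := by linarith
      have e3 : 0 < c - rm := by linarith
      have e4 : 0 < c + rm := by linarith
      have hneg : (c - rp) * (c + rp) * ((c - rm) * (c + rm)) < 0 := by
        nlinarith [mul_pos (mul_pos e1 e2) (mul_pos e3 e4)]
      rw [keyc] at hneg
      have hbc : 0 < b * (c ^ 2 / τ) := by linarith [show b * (c ^ 2 / τ) = b * c ^ 2 / τ from by ring]
      have hq : 0 < c ^ 2 / τ := by positivity
      nlinarith [hq, hbc]
    · intro hbpos
      have hneg : (c - rp) * (c + rp) * ((c - rm) * (c + rm)) < 0 := by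
        rw [keyc]
        have : 0 < b * c ^ 2 / τ := by positivity
        linarith
      have hmm : rm ^ 2 ≤ rp ^ 2 := by rw [hp2, hm2]; linarith
      have h1 : rm ^ 2 < c ^ 2 := by nlinarith
      have h2 : c ^ 2 < rp ^ 2 := by nlinarith
      have hrmc : rm < c := by nlinarith
      have hcrp : c < rp := by nlinarith
      exact ⟨by linarith, by linarith, by linarith, hrmpos, hrmc, hcrp⟩
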